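/- Let p ∈ (2,4), a > 0, b > 0, μ > 0, σ > 0, and define g : [0,∞) → ℝ by g(t) = (a/2)σt² + (b/4)σ²t⁴ − (μ/p)σt^p. Set t̃₃ = ((p−2)μ/(2bσ))^(1/(4−p)). If a − ((4−p)μ/2)·((p−2)μ/(2bσ))^((p−2)/(4−p)) < 0, then there exist unique numbers 0 < t̃₂ < t̃₃ < t̃₄ such that t̃₂ is the unique local maximum point of g on (0,∞), t̃₄ is the unique local minimum point of g on (0,∞), and g(t̃₂) = max{g(t) : 0 ≤ t < t̃₄}. -/

import Mathlib

open Real Set Filter Topology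

lemma aux_not_max_right {g : ℝ → ℝ} {s : Set ℝ} {t v : ℝ}
    (hm : StrictMonoOn g s) (hts : t ∈ s) (htv : t < v) (hsub : Ioo t v ⊆ s) :
    ¬ IsLocalMax g t := by
  intro hmax
  have h1 : ∀ᶠ x in 𝓝[>] t, g x ≤ g t := hmax.filter_mono nhdsWithin_le_nhds
  have h2 : ∀ᶠ x in 𝓝[>] t, x ∈ Ioo t v := Ioo_mem_nhdsGT_of_mem ⟨le_refl t, htv⟩
  obtain ⟨x, hx1, hx2⟩ := (h1.and h2).exists
  exact absurd hx1 (not_le.2 (hm hts (hsub hx2) hx2.1))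

lemma aux_not_max_left {g : ℝ → ℝ} {s : Set ℝ} {u t : ℝ}
    (hm : StrictAntiOn g s) (hts : t ∈ s) (hut : u < t) (hsub : Ioo u t ⊆ s) :
    ¬ IsLocalMax g t := by
  intro hmax
  have h1 : ∀ᶠ x in 𝓝[<] t, g x ≤ g t := hmax.filter_mono nhdsWithin_le_nhds
  have h2 : ∀ᶠ x in 𝓝[<] t, x ∈ Ioo u t := Ioo_mem_nhdsLT_of_mem ⟨hut, le_refl t⟩
  obtain ⟨x, hx1, hx2⟩ := (h1.and h2).exists
  exact absurd hx1 (not_le.2 (hm (hsub hx2) hts hx2.2))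

lemma aux_not_min_right {g : ℝ → ℝ} {s : Set ℝ} {t v : ℝ}
    (hm : StrictAntiOn g s) (hts : t ∈ s) (htv : t < v) (hsub : Ioo t v ⊆ s) :
    ¬ IsLocalMin g t := by
  intro hmin
  have h1 : ∀ᶠ x in 𝓝[>] t, g t ≤ g x := hmin.filter_mono nhdsWithin_le_nhds
  have h2 : ∀ᶠ x in 𝓝[>] t, x ∈ Ioo t v := Ioo_mem_nhdsGT_of_mem ⟨le_refl t, htv⟩
  obtain ⟨x, hx1, hx2⟩ := (h1.and h2).exists
  exact absurd hx1 (not_le.2 (hm hts (hsub hx2) hx2.1))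

lemma aux_not_min_left {g : ℝ → ℝ} {s : Set ℝ} {u t : ℝ}
    (hm : StrictMonoOn g s) (hts : t ∈ s) (hut : u < t) (hsub : Ioo u t ⊆ s) :
    ¬ IsLocalMin g t := by
  intro hmin
  have h1 : ∀ᶠ x in 𝓝[<] t, g t ≤ g x := hmin.filter_mono nhdsWithin_le_nhds
  have h2 : ∀ᶠ x in 𝓝[<] t, x ∈ Ioo u t := Ioo_mem_nhdsLT_of_mem ⟨hut, le_refl t⟩
  obtain ⟨x, hx1, hx2⟩ := (h1.and h2).exists
  exact absurd hx1 (not_le.2 (hm (hsub hx2) hts hx2.2))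


set_option maxHeartbeats 1000000 in
/-- For `p ∈ (2,4)`, `a, b, μ, σ > 0`,
`g t = (a/2)σt² + (b/4)σ²t⁴ − (μ/p)σt^p` and `t̃₃ = ((p−2)μ/(2bσ))^(1/(4−p))`,
if `a − ((4−p)μ/2)·((p−2)μ/(2bσ))^((p−2)/(4−p)) < 0` then there exist unique
`0 < t̃₂ < t̃₃ < t̃₄` with `t̃₂` the unique local maximum point of `g` on `(0,∞)`,
`t̃₄` the unique local minimum point of `g` on `(0,∞)`, and
`g t̃₂ = max {g t : 0 ≤ t < t̃₄}`. -/
theorem stmt_6 (p a b μ σ : ℝ) (hp2 : 2 < p) (hp4 : p < 4)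
    (ha : 0 < a) (hb : 0 < b) (hμ : 0 < μ) (hσ : 0 < σ)
    (h : a - (4 - p) * μ / 2 * ((p - 2) * μ / (2 * b * σ)) ^ ((p - 2) / (4 - p)) < 0) :
    let g : ℝ → ℝ := fun t => a / 2 * σ * t ^ 2 + b / 4 * σ ^ 2 * t ^ 4 - μ / p * σ * t ^ p
    let t3 : ℝ := ((p - 2) * μ / (2 * b * σ)) ^ ((1 : ℝ) / (4 - p))
    ∃ t2 t4 : ℝ, 0 < t2 ∧ t2 < t3 ∧ t3 < t4 ∧
      IsLocalMax g t2 ∧ (∀ t : ℝ, 0 < t → IsLocalMax g t → t = t2) ∧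
      IsLocalMin g t4 ∧ (∀ t : ℝ, 0 < t → IsLocalMin g t → t = t4) ∧
      (∀ t : ℝ, 0 ≤ t → t < t4 → g t ≤ g t2) := by
  intro g t3
  have hp0 : (0:ℝ) < p := by linarith
  have h4p : (0:ℝ) < 4 - p := by linarith
  have hp2' : (0:ℝ) < p - 2 := by linarith
  obtain ⟨c, hc_def⟩ : ∃ c : ℝ, c = (p - 2) * μ / (2 * b * σ) := ⟨_, rfl⟩
  have hc : 0 < c := by rw [hc_def]; exact div_pos (mul_pos hp2' hμ) (by positivity)
  have ht3c : t3 = c ^ ((1:ℝ)/(4-p)) := by rw [hc_def]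
  have ht3 : 0 < t3 := by rw [ht3c]; exact Real.rpow_pos_of_pos hc _
  rw [← hc_def] at h
  set F : ℝ → ℝ := fun t => a + b * σ * t ^ 2 - μ * t ^ (p - 2) with hF_def
  have hF : ∀ t : ℝ, F t = a + b * σ * t ^ 2 - μ * t ^ (p - 2) := fun _ => rfl
  have hrc : Continuous fun t : ℝ => t ^ (p - 2) :=
    continuous_iff_continuousAt.mpr fun x => Real.continuousAt_rpow_const x _ (Or.inr (by linarith))
  have hFcont : Continuous F := by
    rw [hF_def]
    exact (continuous_const.add (continuous_const.mul (continuous_pow 2))).sub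
      (continuous_const.mul hrc)
  have hFd : ∀ t : ℝ, 0 < t →
      HasDerivAt F (b * σ * (2 * t) - μ * ((p - 2) * t ^ (p - 3))) t := by
    intro t ht
    have h1 : HasDerivAt (fun x : ℝ => b * σ * x ^ 2) (b * σ * (2 * t)) t := by
      simpa using (hasDerivAt_pow 2 t).const_mul (b * σ)
    have h2 : HasDerivAt (fun x : ℝ => μ * x ^ (p - 2)) (μ * ((p - 2) * t ^ (p - 2 - 1))) t :=
      (Real.hasDerivAt_rpow_const (Or.inl ht.ne')).const_mul μ
    have h3 := (h1.const_add a).sub h2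
    rw [hF_def]
    simpa [show p - 2 - 1 = p - 3 by ring, Pi.sub_def] using h3
  have hc_mul : 2 * b * σ * c = (p - 2) * μ := by
    rw [hc_def]; field_simp
  -- derivative sign for F
  have hFderiv_neg : ∀ x ∈ Ioo (0:ℝ) t3, deriv F x < 0 := by
    intro x hx
    rw [(hFd x hx.1).deriv]
    have hA : 0 < x ^ (p - 3) := Real.rpow_pos_of_pos hx.1 _
    have hAB : x ^ (p - 3) * x ^ (4 - p) = x := by
      rw [← Real.rpow_add hx.1]; norm_num
    have hlt : x ^ (4 - p) < c := by
      calc x ^ (4 - p) < t3 ^ (4 - p) := Real.rpow_lt_rpow hx.1.le hx.2 h4p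
        _ = c := by
          rw [ht3c, ← Real.rpow_mul hc.le]
          rw [show (1:ℝ)/(4-p) * (4-p) = 1 by field_simp]
          exact Real.rpow_one c
    have h2 : 2 * b * σ * x ^ (4 - p) < (p - 2) * μ := by
      have h3 := mul_lt_mul_of_pos_left hlt (show (0:ℝ) < 2 * b * σ by positivity)
      linarith [h3, hc_mul]
    have key := mul_lt_mul_of_pos_left h2 hA
    have e : b * σ * (2 * x) = x ^ (p - 3) * (2 * b * σ * x ^ (4 - p)) := by
      rw [show x ^ (p - 3) * (2 * b * σ * x ^ (4 - p))
          = 2 * b * σ * (x ^ (p - 3) * x ^ (4 - p)) by ring, hAB]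
      ring
    linarith [key, e]
  have hFderiv_pos : ∀ x ∈ Ioi t3, 0 < deriv F x := by
    intro x hx
    have hx0 : 0 < x := ht3.trans hx
    rw [(hFd x hx0).deriv]
    have hA : 0 < x ^ (p - 3) := Real.rpow_pos_of_pos hx0 _
    have hAB : x ^ (p - 3) * x ^ (4 - p) = x := by
      rw [← Real.rpow_add hx0]; norm_num
    have hlt : c < x ^ (4 - p) := by
      calc c = t3 ^ (4 - p) := by
            rw [ht3c, ← Real.rpow_mul hc.le]
            rw [show (1:ℝ)/(4-p) * (4-p) = 1 by field_simp]
            exact (Real.rpow_one c).symm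
        _ < x ^ (4 - p) := Real.rpow_lt_rpow ht3.le hx h4p
    have h2 : (p - 2) * μ < 2 * b * σ * x ^ (4 - p) := by
      have h3 := mul_lt_mul_of_pos_left hlt (show (0:ℝ) < 2 * b * σ by positivity)
      linarith [h3, hc_mul]
    have key := mul_lt_mul_of_pos_left h2 hA
    have e : b * σ * (2 * x) = x ^ (p - 3) * (2 * b * σ * x ^ (4 - p)) := by
      rw [show x ^ (p - 3) * (2 * b * σ * x ^ (4 - p))
          = 2 * b * σ * (x ^ (p - 3) * x ^ (4 - p)) by ring, hAB]
      ring
    linarith [key, e]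
  have hFanti : StrictAntiOn F (Icc 0 t3) :=
    strictAntiOn_of_deriv_neg (convex_Icc _ _) hFcont.continuousOn
      (by rw [interior_Icc]; exact hFderiv_neg)
  have hFmono : StrictMonoOn F (Ici t3) :=
    strictMonoOn_of_deriv_pos (convex_Ici _) hFcont.continuousOn
      (by rw [interior_Ici]; exact hFderiv_pos)
  -- F t3 < 0
  have hKexp : t3 ^ (p - 2) = c ^ ((p - 2) / (4 - p)) := by
    rw [ht3c, ← Real.rpow_mul hc.le]
    congr 1; field_simp
  have ht3sq : t3 ^ (2:ℕ) = c * c ^ ((p - 2) / (4 - p)) := by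
    rw [← Real.rpow_natCast t3 2, ht3c, ← Real.rpow_mul hc.le]
    rw [show (1:ℝ)/(4-p) * ((2:ℕ):ℝ) = 1 + (p-2)/(4-p) by push_cast; field_simp; ring]
    rw [Real.rpow_add hc, Real.rpow_one]
  have hFt3 : F t3 < 0 := by
    have hbσc : b * σ * c = (p - 2) * μ / 2 := by rw [hc_def]; field_simp
    have e2 : b * σ * c * c ^ ((p - 2) / (4 - p))
        = (p - 2) * μ / 2 * c ^ ((p - 2) / (4 - p)) := by rw [hbσc]
    rw [hF, ht3sq, hKexp]
    nlinarith [h, e2]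
  -- small point s with F s > 0
  obtain ⟨s0, hs0_def⟩ : ∃ s0 : ℝ, s0 = (a / μ) ^ ((1:ℝ)/(p-2)) := ⟨_, rfl⟩
  have hs0 : 0 < s0 := by rw [hs0_def]; exact Real.rpow_pos_of_pos (div_pos ha hμ) _
  obtain ⟨s, hs_def⟩ : ∃ s : ℝ, s = min s0 t3 / 2 := ⟨_, rfl⟩
  have hs : 0 < s := by rw [hs_def]; exact div_pos (lt_min hs0 ht3) two_pos
  have hst3 : s < t3 := by
    have h1 := min_le_right s0 t3
    rw [hs_def]; linarith
  have hss0 : s ≤ s0 := by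
    have h1 := min_le_left s0 t3
    rw [hs_def]; linarith
  have hFs : 0 < F s := by
    have h1 : s ^ (p - 2) ≤ s0 ^ (p - 2) := Real.rpow_le_rpow hs.le hss0 hp2'.le
    have h2 : s0 ^ (p - 2) = a / μ := by
      rw [hs0_def, ← Real.rpow_mul (div_pos ha hμ).le]
      rw [show (1:ℝ)/(p-2) * (p-2) = 1 by field_simp]
      exact Real.rpow_one _
    have h3 : μ * s ^ (p - 2) ≤ a := by
      rw [h2] at h1
      have h4 := mul_le_mul_of_nonneg_left h1 hμ.le
      have h5 : μ * (a / μ) = a := by field_simp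
      linarith
    have h6 : 0 < b * σ * s ^ 2 := by positivity
    rw [hF]; linarith
  -- big point T with F T > 0
  obtain ⟨M, hM_def⟩ : ∃ M : ℝ, M = (μ / (b * σ)) ^ ((1:ℝ)/(4-p)) := ⟨_, rfl⟩
  have hM : 0 < M := by
    rw [hM_def]; exact Real.rpow_pos_of_pos (div_pos hμ (by positivity)) _
  obtain ⟨T, hT_def⟩ : ∃ T : ℝ, T = max (t3 + 1) M := ⟨_, rfl⟩
  have hT3T : t3 < T := by
    rw [hT_def]; exact lt_of_lt_of_le (by linarith) (le_max_left _ _)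
  have hT0 : 0 < T := ht3.trans hT3T
  have hFT : 0 < F T := by
    have hge : μ / (b * σ) ≤ T ^ (4 - p) := by
      calc μ / (b*σ) = M ^ (4 - p) := by
            rw [hM_def, ← Real.rpow_mul (div_pos hμ (by positivity)).le]
            rw [show (1:ℝ)/(4-p) * (4-p) = 1 by field_simp]
            exact (Real.rpow_one _).symm
        _ ≤ T ^ (4 - p) := by
            apply Real.rpow_le_rpow hM.le _ h4p.le
            rw [hT_def]; exact le_max_right _ _
    have hge' : μ ≤ b * σ * T ^ (4 - p) := by
      rw [div_le_iff₀ (by positivity : (0:ℝ) < b * σ)] at hge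
      linarith [hge]
    have hTe : T ^ (4 - p) * T ^ (p - 2) = T ^ (2:ℕ) := by
      rw [← Real.rpow_add hT0, ← Real.rpow_natCast T 2]
      norm_num
    have hTp : 0 < T ^ (p - 2) := Real.rpow_pos_of_pos hT0 _
    have key : μ * T ^ (p - 2) ≤ b * σ * T ^ (2:ℕ) := by
      calc μ * T ^ (p-2) ≤ (b * σ * T ^ (4-p)) * T ^ (p-2) :=
            mul_le_mul_of_nonneg_right hge' hTp.le
        _ = b * σ * T ^ (2:ℕ) := by rw [mul_assoc, hTe]
    rw [hF]; linarith
  -- IVT: zeros t2 and t4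
  obtain ⟨t2, ht2mem, ht2zero⟩ : ∃ x ∈ Ioo s t3, F x = 0 := by
    have h0 : (0:ℝ) ∈ F '' Ioo s t3 :=
      intermediate_value_Ioo' hst3.le hFcont.continuousOn ⟨hFt3, hFs⟩
    obtain ⟨x, hx, hx0⟩ := h0
    exact ⟨x, hx, hx0⟩
  obtain ⟨t4, ht4mem, ht4zero⟩ : ∃ x ∈ Ioo t3 T, F x = 0 := by
    have h0 : (0:ℝ) ∈ F '' Ioo t3 T :=
      intermediate_value_Ioo hT3T.le hFcont.continuousOn ⟨hFt3, hFT⟩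
    obtain ⟨x, hx, hx0⟩ := h0
    exact ⟨x, hx, hx0⟩
  have ht20 : 0 < t2 := hs.trans ht2mem.1
  have ht2t3 : t2 < t3 := ht2mem.2
  have ht3t4 : t3 < t4 := ht4mem.1
  have ht2t4 : t2 < t4 := ht2t3.trans ht3t4
  -- sign of F
  have hsign1 : ∀ t : ℝ, 0 ≤ t → t < t2 → 0 < F t := by
    intro t ht0 htlt
    have := hFanti ⟨ht0, by linarith⟩ ⟨ht20.le, ht2t3.le⟩ htlt
    rw [ht2zero] at this; exact this
  have hsign2 : ∀ t : ℝ, t2 < t → t < t4 → F t < 0 := by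
    intro t htl htr
    rcases le_or_gt t t3 with hle | hgt
    · have := hFanti ⟨ht20.le, ht2t3.le⟩ ⟨by linarith, hle⟩ htl
      rw [ht2zero] at this; exact this
    · have := hFmono (le_of_lt hgt) (le_of_lt ht3t4) htr
      rw [ht4zero] at this; exact this
  have hsign3 : ∀ t : ℝ, t4 < t → 0 < F t := by
    intro t htl
    have := hFmono ht3t4.le (by linarith : t3 ≤ t) htl
    rw [ht4zero] at this; exact this
  -- derivative of g
  have hgc : Continuous g := by
    have hrp : Continuous fun t : ℝ => t ^ p :=
      continuous_iff_continuousAt.mpr fun x => Real.continuousAt_rpow_const x _ (Or.inr hp0.le)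
    exact ((continuous_const.mul (continuous_pow 2)).add
      (continuous_const.mul (continuous_pow 4))).sub (continuous_const.mul hrp)
  have hgd : ∀ t : ℝ, 0 < t → HasDerivAt g (σ * t * F t) t := by
    intro t ht
    have h1 : HasDerivAt (fun x : ℝ => a / 2 * σ * x ^ 2) (a / 2 * σ * (2 * t)) t := by
      simpa using (hasDerivAt_pow 2 t).const_mul (a / 2 * σ)
    have h2 : HasDerivAt (fun x : ℝ => b / 4 * σ ^ 2 * x ^ 4) (b / 4 * σ ^ 2 * (4 * t ^ 3)) t := by
      simpa using (hasDerivAt_pow 4 t).const_mul (b / 4 * σ ^ 2)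
    have h3 : HasDerivAt (fun x : ℝ => μ / p * σ * x ^ p) (μ / p * σ * (p * t ^ (p - 1))) t :=
      (Real.hasDerivAt_rpow_const (Or.inl ht.ne')).const_mul (μ / p * σ)
    have h4 := (h1.add h2).sub h3
    have he : σ * t * F t = a / 2 * σ * (2 * t) + b / 4 * σ ^ 2 * (4 * t ^ 3)
        - μ / p * σ * (p * t ^ (p - 1)) := by
      have ht1 : t ^ (p - 1) = t ^ (p - 2) * t := by
        rw [show p - 1 = p - 2 + 1 by ring, Real.rpow_add ht, Real.rpow_one]
      rw [ht1, hF]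
      field_simp
    rw [he]
    exact h4
  -- monotonicity of g
  have hg1 : StrictMonoOn g (Icc 0 t2) := by
    apply strictMonoOn_of_deriv_pos (convex_Icc _ _) hgc.continuousOn
    rw [interior_Icc]; intro x hx
    rw [(hgd x hx.1).deriv]
    exact mul_pos (mul_pos hσ hx.1) (hsign1 x hx.1.le hx.2)
  have hg2 : StrictAntiOn g (Icc t2 t4) := by
    apply strictAntiOn_of_deriv_neg (convex_Icc _ _) hgc.continuousOn
    rw [interior_Icc]; intro x hx
    rw [(hgd x (ht20.trans hx.1)).deriv]
    exact mul_neg_of_pos_of_neg (mul_pos hσ (ht20.trans hx.1)) (hsign2 x hx.1 hx.2)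
  have hg3 : StrictMonoOn g (Ici t4) := by
    apply strictMonoOn_of_deriv_pos (convex_Ici _) hgc.continuousOn
    rw [interior_Ici]; intro x hx
    have hx0 : 0 < x := ht20.trans (ht2t4.trans hx)
    rw [(hgd x hx0).deriv]
    exact mul_pos (mul_pos hσ hx0) (hsign3 x hx)
  -- global max on [0, t4)
  have hmax' : ∀ t : ℝ, 0 ≤ t → t < t4 → g t ≤ g t2 := by
    intro t ht0 htt4
    rcases le_total t t2 with hle | hge
    · exact hg1.monotoneOn ⟨ht0, hle⟩ ⟨ht20.le, le_refl t2⟩ hle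
    · exact hg2.antitoneOn ⟨le_refl t2, ht2t4.le⟩ ⟨hge, htt4.le⟩ hge
  have hmin' : ∀ t : ℝ, t2 < t → g t4 ≤ g t := by
    intro t ht2t
    rcases le_total t t4 with hle | hge
    · exact hg2.antitoneOn ⟨ht2t.le, hle⟩ ⟨ht2t4.le, le_refl t4⟩ hle
    · exact hg3.monotoneOn (le_refl t4 : t4 ∈ Ici t4) hge hge
  have hlocmax : IsLocalMax g t2 := by
    have hmem : Ioo (0:ℝ) t4 ∈ 𝓝 t2 := Ioo_mem_nhds ht20 ht2t4
    exact Filter.eventually_of_mem hmem fun x hx => hmax' x hx.1.le hx.2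
  have hlocmin : IsLocalMin g t4 := by
    have hmem : Ioo t2 (t4 + 1) ∈ 𝓝 t4 := Ioo_mem_nhds ht2t4 (by linarith)
    exact Filter.eventually_of_mem hmem fun x hx => hmin' x hx.1
  refine ⟨t2, t4, ht20, ht2t3, ht3t4, hlocmax, ?_, hlocmin, ?_, hmax'⟩
  · intro t ht htmax
    rcases lt_trichotomy t t2 with hlt | heq | hgt
    · exact absurd htmax (aux_not_max_right hg1 ⟨ht.le, hlt.le⟩ hlt
        (fun x hx => ⟨ht.le.trans hx.1.le, hx.2.le⟩))
    · exact heq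
    · rcases le_or_gt t t4 with hle | hgt4
      · exact absurd htmax (aux_not_max_left hg2 ⟨hgt.le, hle⟩ hgt
          (fun x hx => ⟨hx.1.le, hx.2.le.trans hle⟩))
      · exact absurd htmax (aux_not_max_right hg3 hgt4.le (lt_add_one t)
          (fun x hx => hgt4.le.trans hx.1.le))
  · intro t ht htmin
    rcases lt_trichotomy t t4 with hlt | heq | hgt
    · rcases le_or_gt t t2 with hle | hgt2
      · exact absurd htmin (aux_not_min_left hg1 ⟨ht.le, hle⟩ ht
          (fun x hx => ⟨hx.1.le, hx.2.le.trans hle⟩))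
      · exact absurd htmin (aux_not_min_right hg2 ⟨hgt2.le, hlt.le⟩ hlt
          (fun x hx => ⟨hgt2.le.trans hx.1.le, hx.2.le⟩))
    · exact heq
    · exact absurd htmin (aux_not_min_left hg3 hgt.le hgt
        (fun x hx => hx.1.le))
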